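/- Define ζ : ℝ → ℝ by ζ(t) = −∫_{−∞}^0 e^τ ω(τ + t) dτ + ω(t). Then ζ satisfies the pathwise integral equation of the Langevin equation dz + z dt = dW: for every t ∈ ℝ, ζ(t) = ζ(0) − ∫₀ᵗ ζ(s) ds + ω(t). -/

import Mathlib

open MeasureTheory

/-- The stationary Ornstein–Uhlenbeck path `ζ` solves the pathwise integral
equation of the Langevin equation `dz + z dt = dW`:
`ζ(t) = ζ(0) − ∫₀ᵗ ζ(s) ds + ω(t)`. -/
theorem ou_solves_langevin
    (ω : ℝ → ℝ) (hω : Continuous ω) (hω0 : ω 0 = 0)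
    (C δ : ℝ) (hC : 0 ≤ C) (hδ0 : 0 < δ) (hδ1 : δ < 1)
    (hgrowth : ∀ s : ℝ, |ω s| ≤ C + |s| ^ δ)
    (ζ : ℝ → ℝ)
    (hζ : ∀ t : ℝ, ζ t = -(∫ τ in Set.Iic (0:ℝ), Real.exp τ * ω (τ + t)) + ω t) :
    ∀ t : ℝ, ζ t = ζ 0 - (∫ s in (0:ℝ)..t, ζ s) + ω t := by
  set f : ℝ → ℝ := fun u => Real.exp u * ω u with hf_def
  have hfc : Continuous f := Real.continuous_exp.mul hω
  -- integrability of f on each Iic a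
  have hexp2 : IntegrableOn (fun u : ℝ => Real.exp (u / 2)) (Set.Iic (0:ℝ)) := by
    have h0 : Integrable ((Set.Iic (0:ℝ)).indicator Real.exp) := by
      rw [integrable_indicator_iff measurableSet_Iic]
      exact integrableOn_exp_Iic 0
    have h1 : Integrable (fun u : ℝ => (Set.Iic (0:ℝ)).indicator Real.exp (u * (1/2))) :=
      (integrable_comp_mul_right_iff _ (by norm_num : (1/2 : ℝ) ≠ 0)).2 h0
    have h2 : (fun u : ℝ => (Set.Iic (0:ℝ)).indicator Real.exp (u * (1/2)))
        = (Set.Iic (0:ℝ)).indicator (fun u : ℝ => Real.exp (u / 2)) := by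
      funext u
      simp only [Set.indicator, Set.mem_Iic]
      have hiff : u * (1/2) ≤ 0 ↔ u ≤ 0 := by constructor <;> intro <;> linarith
      by_cases h : u ≤ 0
      · rw [if_pos (hiff.2 h), if_pos h]; ring_nf
      · rw [if_neg (fun hh => h (hiff.1 hh)), if_neg h]
    rw [← integrable_indicator_iff measurableSet_Iic, ← h2]
    exact h1
  have hint : ∀ a : ℝ, IntegrableOn f (Set.Iic a) := by
    intro a
    have hsub : Set.Iic a ⊆ Set.Iic 0 ∪ Set.Icc 0 a := by
      intro x hx
      rcases le_or_gt x 0 with h | h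
      · exact Or.inl h
      · exact Or.inr ⟨h.le, hx⟩
    refine IntegrableOn.mono_set ?_ hsub
    refine IntegrableOn.union ?_ hfc.integrableOn_Icc
    have hg : IntegrableOn (fun u : ℝ => (C + 1) * Real.exp u + 2 * Real.exp (u / 2))
        (Set.Iic (0:ℝ)) :=
      (((integrableOn_exp_Iic 0).const_mul (C + 1)).add (hexp2.const_mul 2))
    refine Integrable.mono' hg (hfc.aestronglyMeasurable.restrict) ?_
    rw [ae_restrict_iff' measurableSet_Iic]
    refine Filter.Eventually.of_forall fun u hu => ?_
    have hu0 : u ≤ 0 := hu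
    have h1 : |ω u| ≤ C + 1 + (-u) := by
      have h2 : |u| ^ δ ≤ 1 + |u| := by
        rcases le_or_gt (|u|) 1 with h | h
        · have := Real.rpow_le_one (abs_nonneg u) h hδ0.le
          linarith [abs_nonneg u]
        · have := Real.rpow_le_rpow_of_exponent_le h.le hδ1.le
          rw [Real.rpow_one] at this
          linarith
      have := hgrowth u
      rw [abs_of_nonpos hu0] at h2 this
      linarith
    have hnu : (-u) * Real.exp (u / 2) ≤ 2 := by
      have h3 : -u / 2 + 1 ≤ Real.exp (-u / 2) := Real.add_one_le_exp _
      have h4 : Real.exp (u / 2) = (Real.exp (-u / 2))⁻¹ := by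
        rw [← Real.exp_neg]; ring_nf
      have h5 : (0:ℝ) < Real.exp (-u / 2) := Real.exp_pos _
      rw [h4]
      rw [mul_inv_le_iff₀ h5]
      nlinarith
    have hfu : ‖f u‖ ≤ (C + 1) * Real.exp u + 2 * Real.exp (u / 2) := by
      have hepos : (0:ℝ) < Real.exp u := Real.exp_pos u
      have : ‖f u‖ = Real.exp u * |ω u| := by
        rw [hf_def]; simp [abs_mul, abs_of_pos hepos]
      rw [this]
      have h6 : Real.exp u * |ω u| ≤ Real.exp u * (C + 1 + (-u)) :=
        mul_le_mul_of_nonneg_left h1 hepos.le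
      have h7 : Real.exp u * (-u) ≤ 2 * Real.exp (u / 2) := by
        have : Real.exp u = Real.exp (u / 2) * Real.exp (u / 2) := by
          rw [← Real.exp_add]; ring_nf
        rw [this]
        have := mul_le_mul_of_nonneg_left hnu (Real.exp_pos (u / 2)).le
        nlinarith [Real.exp_pos (u / 2)]
      nlinarith
    exact hfu
  set J : ℝ → ℝ := fun t => ∫ u in Set.Iic t, f u with hJ_def
  -- change of variables
  have hI : ∀ t : ℝ, (∫ τ in Set.Iic (0:ℝ), Real.exp τ * ω (τ + t))
      = Real.exp (-t) * J t := by
    intro t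
    have h1 : (∫ τ in Set.Iic (0:ℝ), Real.exp τ * ω (τ + t))
        = ∫ τ in Set.Iic (0:ℝ), Real.exp (-t) * f (τ + t) := by
      refine setIntegral_congr_fun measurableSet_Iic fun τ _ => ?_
      rw [hf_def]
      simp only
      rw [← mul_assoc, ← Real.exp_add]
      ring_nf
    have h2 : ∀ τ : ℝ, (Set.Iic (0:ℝ)).indicator (fun τ => f (τ + t)) τ
        = (Set.Iic t).indicator f (τ + t) := by
      intro τ
      simp only [Set.indicator, Set.mem_Iic]
      have hiff : τ + t ≤ t ↔ τ ≤ 0 := by constructor <;> intro <;> linarith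
      by_cases h : τ ≤ 0
      · rw [if_pos h, if_pos (hiff.2 h)]
      · rw [if_neg h, if_neg (fun hh => h (hiff.1 hh))]
    have h3 : (∫ τ in Set.Iic (0:ℝ), f (τ + t)) = ∫ u in Set.Iic t, f u := by
      rw [← integral_indicator measurableSet_Iic, ← integral_indicator measurableSet_Iic]
      simp_rw [h2]
      exact integral_add_right_eq_self ((Set.Iic t).indicator f) t
    rw [h1, integral_const_mul, h3]
  -- J as interval integral
  have hJeq : ∀ t : ℝ, J t = J 0 + ∫ u in (0:ℝ)..t, f u := by
    intro t
    have := intervalIntegral.integral_Iic_sub_Iic (hint 0) (hint t)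
    rw [hJ_def]
    simp only
    linarith [this]
  -- derivative of J
  have hJd : ∀ t : ℝ, HasDerivAt J (f t) t := by
    intro t
    have h : HasDerivAt (fun s => J 0 + ∫ u in (0:ℝ)..s, f u) (f t) t := by
      refine HasDerivAt.const_add _ ?_
      exact intervalIntegral.integral_hasDerivAt_right (hfc.intervalIntegrable _ _)
        (hfc.stronglyMeasurableAtFilter _ _) hfc.continuousAt
    exact h.congr_of_eventuallyEq (Filter.Eventually.of_forall fun s => hJeq s)
  set F : ℝ → ℝ := fun t => Real.exp (-t) * J t with hF_def
  have hFd : ∀ t : ℝ, HasDerivAt F (ζ t) t := by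
    intro t
    have he : HasDerivAt (fun t : ℝ => Real.exp (-t)) (-Real.exp (-t)) t := by
      have := (Real.hasDerivAt_exp (-t)).comp t (hasDerivAt_neg t)
      simpa [Function.comp_def] using this
    have h := he.mul (hJd t)
    have heq : -Real.exp (-t) * J t + Real.exp (-t) * f t = ζ t := by
      rw [hζ t, hI t, hf_def]
      have : Real.exp (-t) * (Real.exp t * ω t) = ω t := by
        rw [← mul_assoc, ← Real.exp_add]
        simp
      simp only
      rw [this]
      ring
    rw [heq] at h
    exact h
  have hζc : Continuous ζ := by
    have : ζ = fun t => -(Real.exp (-t) * J t) + ω t := by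
      funext t; rw [hζ t, hI t]
    rw [this]
    have hJc : Continuous J := by
      rw [continuous_iff_continuousAt]
      exact fun t => (hJd t).continuousAt
    exact (((Real.continuous_exp.comp continuous_neg).mul hJc).neg).add hω
  intro t
  have hFTC : (∫ s in (0:ℝ)..t, ζ s) = F t - F 0 :=
    intervalIntegral.integral_eq_sub_of_hasDerivAt (fun s _ => hFd s)
      (hζc.intervalIntegrable _ _)
  have hζt : ζ t = -(F t) + ω t := by rw [hζ t, hI t, hF_def]
  have hζ0 : ζ 0 = -(F 0) := by rw [hζ 0, hI 0, hω0, hF_def]; ring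
  rw [hζt, hζ0, hFTC]
  ring
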